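/- With ϑ strictly convex, v = ϑ', and u(v) its inverse, the entropy-conservative flux defined by the Tadmor condition (v(u⁺)−v(u⁻)) h_ec(u⁻,u⁺) = ψ(u⁺) − ψ(u⁻), where ψ(u) = v(u) f(u) − g(u) and g' = v f', admits the closed form h_ec(u⁻,u⁺) = ∫₀¹ f(u(θ v(u⁺)+(1−θ) v(u⁻))) dθ for u⁻ ≠ u⁺. -/

import Mathlib

/-- Closed form of the entropy-conservative flux defined by the Tadmor condition. -/
theorem stmt3 (f ϑ uinv : ℝ → ℝ) (hec : ℝ → ℝ → ℝ) (g ψ : ℝ → ℝ)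
    (hf : ContDiff ℝ 1 f)
    (hϑ : ContDiff ℝ 2 ϑ) (hconv : ∀ x, 0 < deriv (deriv ϑ) x)
    (hinvL : Function.LeftInverse uinv (deriv ϑ))
    (hinvR : Function.RightInverse uinv (deriv ϑ))
    (hcont : Continuous uinv)
    (hg : ∀ u, g u = ∫ w in (0:ℝ)..u, deriv ϑ w * deriv f w)
    (hψ : ∀ u, ψ u = deriv ϑ u * f u - g u)
    (htad : ∀ a b, (deriv ϑ b - deriv ϑ a) * hec a b = ψ b - ψ a)
    (um up : ℝ) (hne : um ≠ up) :
    hec um up = ∫ θ in (0:ℝ)..1,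
      f (uinv (θ * deriv ϑ up + (1 - θ) * deriv ϑ um)) := by
  set v := deriv ϑ with hv
  -- regularity facts
  have hϑ' : ContDiff ℝ 1 v := by
    have := (contDiff_succ_iff_deriv (n := 1)).mp (by exact_mod_cast hϑ)
    exact this.2.2
  have hvdiff : Differentiable ℝ v := hϑ'.differentiable one_ne_zero
  have hvcont : Continuous v := hvdiff.continuous
  have hv'cont : Continuous (deriv v) := hϑ'.continuous_deriv le_rfl
  have hfcont : Continuous f := hf.continuous
  have hf'cont : Continuous (deriv f) := hf.continuous_deriv le_rfl
  have hfdiff : Differentiable ℝ f := hf.differentiable one_ne_zero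
  -- v strictly monotone, so v um ≠ v up
  have hmono : StrictMono v := by
    apply strictMono_of_deriv_pos
    intro x; exact hconv x
  have hvne : v up - v um ≠ 0 := sub_ne_zero.mpr (fun h => hne (hmono.injective h.symm))
  -- derivative of ψ
  have hgderiv : ∀ u, HasDerivAt g (v u * deriv f u) u := by
    intro u
    have : HasDerivAt (fun u => ∫ w in (0:ℝ)..u, v w * deriv f w) (v u * deriv f u) u :=
      (hvcont.mul hf'cont).integral_hasStrictDerivAt 0 u |>.hasDerivAt
    exact this.congr_of_eventuallyEq (Filter.Eventually.of_forall fun x => (hg x))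
  have hψderiv : ∀ u, HasDerivAt ψ (deriv v u * f u) u := by
    intro u
    have h1 : HasDerivAt (fun u => v u * f u - g u)
        (deriv v u * f u + v u * deriv f u - v u * deriv f u) u :=
      ((hvdiff u).hasDerivAt.mul (hfdiff u).hasDerivAt).sub (hgderiv u)
    have h2 : HasDerivAt ψ (deriv v u * f u + v u * deriv f u - v u * deriv f u) u :=
      h1.congr_of_eventuallyEq (Filter.Eventually.of_forall fun x => (hψ x))
    simpa using h2
  -- FTC: ψ up - ψ um = ∫ deriv v * f
  have hftc : ψ up - ψ um = ∫ w in um..up, deriv v w * f w := by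
    rw [intervalIntegral.integral_eq_sub_of_hasDerivAt (fun x _ => hψderiv x)
      ((hv'cont.mul hfcont).intervalIntegrable um up)]
  -- substitution: ∫_{um}^{up} f w * deriv v w dw = ∫_{v um}^{v up} f (uinv x) dx
  have hsub : ∫ x in v um..v up, f (uinv x) = ∫ w in um..up, deriv v w * f w := by
    have := intervalIntegral.integral_comp_smul_deriv
      (f := v) (f' := deriv v) (g := fun x => f (uinv x)) (a := um) (b := up)
      (fun x _ => (hvdiff x).hasDerivAt) (hv'cont.continuousOn) (hfcont.comp hcont)
    rw [← this]
    apply intervalIntegral.integral_congr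
    intro x _
    simp [Function.comp, hinvL x, smul_eq_mul]
  -- affine substitution on the RHS
  have haff : (∫ θ in (0:ℝ)..1, f (uinv (θ * v up + (1 - θ) * v um)))
      = (v up - v um)⁻¹ * ∫ x in v um..v up, f (uinv x) := by
    have h := intervalIntegral.integral_comp_mul_add (a := (0:ℝ)) (b := 1)
      (f := fun x => f (uinv x)) (c := v up - v um) hvne (v um)
    have heq : ∀ θ : ℝ, f (uinv (θ * v up + (1 - θ) * v um))
        = f (uinv ((v up - v um) * θ + v um)) := by
      intro θ; ring_nf
    simp only [heq]
    rw [h]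
    norm_num
  rw [haff, hsub, ← hftc]
  have := htad um up
  field_simp
  linarith [htad um up]
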